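/- arXiv:1203.1364 — 5 statements merged into one kernel-verified Lean document; each statement's English description precedes it below -/
import Mathlib

section
/- Every separable state satisfies the Peres condition: if ρ is a finite convex combination of projectors onto product vectors, then its partial transpose ρ^Γ is positive semidefinite. -/
open Matrix
open scoped ComplexOrder

/-- Partial transpose with respect to the A system (in the standard basis). -/
noncomputable def ptranspose {M N : ℕ} (ρ : Matrix (Fin M × Fin N) (Fin M × Fin N) ℂ) :
    Matrix (Fin M × Fin N) (Fin M × Fin N) ℂ :=
  Matrix.of fun p q => ρ (q.1, p.2) (p.1, q.2)

/-- Partial trace over the A system: the reduced operator ρ_B. -/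
noncomputable def ptraceA {M N : ℕ} (ρ : Matrix (Fin M × Fin N) (Fin M × Fin N) ℂ) :
    Matrix (Fin N) (Fin N) ℂ :=
  Matrix.of fun j l => ∑ i, ρ (i, j) (i, l)

/-- Partial trace over the B system: the reduced operator ρ_A. -/
noncomputable def ptraceB {M N : ℕ} (ρ : Matrix (Fin M × Fin N) (Fin M × Fin N) ℂ) :
    Matrix (Fin M) (Fin M) ℂ :=
  Matrix.of fun i k => ∑ j, ρ (i, j) (k, j)

set_option maxHeartbeats 800000 in
/-- Peres condition: the partial transpose of a separable state is positive
semidefinite. -/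
theorem ptranspose_separable_posSemidef (M N n : ℕ)
    (p : Fin n → ℝ) (hp : ∀ i, 0 ≤ p i) (hp1 : ∑ i, p i = 1)
    (a : Fin n → Fin M → ℂ) (b : Fin n → Fin N → ℂ)
    (ρ : Matrix (Fin M × Fin N) (Fin M × Fin N) ℂ)
    (hρ : ρ = Matrix.of fun q r =>
      ∑ i, (p i : ℂ) * (a i q.1 * b i q.2) * star (a i r.1 * b i r.2)) :
    (ptranspose ρ).PosSemidef := by
  subst hρ
  set v : Fin n → Fin M × Fin N → ℂ :=
    fun i q => (Real.sqrt (p i) : ℂ) * (star (a i q.1) * b i q.2) with hv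
  have key : ptranspose (Matrix.of fun q r =>
        ∑ i, (p i : ℂ) * (a i q.1 * b i q.2) * star (a i r.1 * b i r.2)) =
      ∑ i, vecMulVec (v i) (star (v i)) := by
    ext q r
    simp only [ptranspose, Matrix.of_apply, Matrix.sum_apply,
      vecMulVec_apply, Pi.star_apply, hv, StarMul.star_mul, star_star,
      Complex.star_def, Complex.conj_ofReal, Complex.conj_conj]
    refine Finset.sum_congr rfl fun i _ => ?_
    have : (Real.sqrt (p i) : ℂ) * (Real.sqrt (p i) : ℂ) = (p i : ℂ) := by
      rw [← Complex.ofReal_mul, Real.mul_self_sqrt (hp i)]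
    rw [show ((p i : ℂ)) = (Real.sqrt (p i) : ℂ) * (Real.sqrt (p i) : ℂ) from this.symm]
    ring
  rw [key]
  apply Finset.sum_induction _ _ (fun A B hA hB => hA.add hB) Matrix.PosSemidef.zero
  intro i _
  rw [vecMulVec_eq (Fin 1), ← conjTranspose_replicateCol]
  exact posSemidef_self_mul_conjTranspose _
end

section
/- Let A = B + C where B and C are Hermitian matrices and rank A = rank B + rank C. If A is positive semidefinite, then B and C are both positive semidefinite. -/
open scoped ComplexOrder

open Matrix
open scoped ComplexOrder

namespace RankAddAux

variable {n : ℕ}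

/-- If `Q * A = A` and range of `X` is contained in range of `A`, then `Q * X = X`. -/
lemma mul_eq_self_of_range_le (Q A X : Matrix (Fin n) (Fin n) ℂ)
    (hQA : Q * A = A)
    (hle : LinearMap.range X.mulVecLin ≤ LinearMap.range A.mulVecLin) :
    Q * X = X := by
  ext i j
  obtain ⟨y, hy⟩ := hle ⟨Pi.single j 1, rfl⟩
  have hy' : A *ᵥ y = X *ᵥ Pi.single j 1 := hy
  have h : (Q * X) *ᵥ Pi.single j 1 = X *ᵥ Pi.single j 1 := by
    rw [← Matrix.mulVec_mulVec, ← hy', Matrix.mulVec_mulVec, hQA]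
  have := congrFun h i
  simpa [Matrix.mulVec_single] using this

/-- Key spectral lemma. -/
lemma posSemidef_of_sum_proj (M N Q : Matrix (Fin n) (Fin n) ℂ)
    (hM : M.IsHermitian) (hsum : M + N = Q) (hQM : Q * M = M)
    (hrank : M.rank + N.rank = Q.rank) : M.PosSemidef := by
  have hinf : LinearMap.range M.mulVecLin ⊓ LinearMap.range N.mulVecLin = ⊥ := by
    have hle : LinearMap.range Q.mulVecLin ≤
        LinearMap.range M.mulVecLin ⊔ LinearMap.range N.mulVecLin := by
      rintro x ⟨y, rfl⟩
      refine Submodule.mem_sup.2 ⟨M *ᵥ y, ⟨y, rfl⟩, N *ᵥ y, ⟨y, rfl⟩, ?_⟩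
      show M *ᵥ y + N *ᵥ y = Q.mulVecLin y
      rw [← Matrix.add_mulVec, hsum]; rfl
    have h1 := Submodule.finrank_sup_add_finrank_inf_eq
      (LinearMap.range M.mulVecLin) (LinearMap.range N.mulVecLin)
    have h2 : Q.rank ≤ Module.finrank ℂ
        ↥(LinearMap.range M.mulVecLin ⊔ LinearMap.range N.mulVecLin) :=
      Submodule.finrank_mono hle
    have h3 : Module.finrank ℂ
        ↥(LinearMap.range M.mulVecLin ⊓ LinearMap.range N.mulVecLin) = 0 := by
      have : M.rank = Module.finrank ℂ ↥(LinearMap.range M.mulVecLin) := rfl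
      have : N.rank = Module.finrank ℂ ↥(LinearMap.range N.mulVecLin) := rfl
      unfold Matrix.rank at hrank h2
      omega
    exact Submodule.finrank_eq_zero.mp h3
  apply hM.posSemidef_iff_eigenvalues_nonneg.mpr
  intro i
  by_contra hlt
  push_neg at hlt
  set μ : ℝ := hM.eigenvalues i with hμ
  have hμ0 : μ ≠ 0 := by intro h; rw [h] at hlt; exact absurd le_rfl (not_le.mpr hlt)
  have hμ1 : (1 : ℂ) - (μ : ℂ) ≠ 0 := by
    intro h
    have : (μ : ℂ) = 1 := by linear_combination -h
    have : μ = 1 := by exact_mod_cast this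
    linarith [show μ < 0 from hlt]
  set v : Fin n → ℂ := ⇑(hM.eigenvectorBasis i) with hv
  have hvne : v ≠ 0 := by
    intro h
    exact hM.eigenvectorBasis.orthonormal.ne_zero i (by ext k; exact congrFun h k)
  have hMv : M *ᵥ v = (μ : ℂ) • v := by
    have := hM.mulVec_eigenvectorBasis i
    rw [hv]
    convert this using 1
    ext k; simp [hμ, Complex.real_smul]
  have hvM : v ∈ LinearMap.range M.mulVecLin := by
    refine ⟨(μ : ℂ)⁻¹ • v, ?_⟩
    show M *ᵥ ((μ : ℂ)⁻¹ • v) = v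
    rw [Matrix.mulVec_smul, hMv, smul_smul, inv_mul_cancel₀ (by exact_mod_cast hμ0), one_smul]
  have hQv : Q *ᵥ v = v := by
    obtain ⟨w, hw⟩ := hvM
    have hw' : M *ᵥ w = v := hw
    rw [← hw', Matrix.mulVec_mulVec, hQM]
  have hNv : N *ᵥ v = ((1 : ℂ) - μ) • v := by
    have : N = Q - M := by rw [← hsum, add_sub_cancel_left]
    rw [this, Matrix.sub_mulVec, hQv, hMv, sub_smul, one_smul]
  have hvN : v ∈ LinearMap.range N.mulVecLin := by
    refine ⟨((1 : ℂ) - μ)⁻¹ • v, ?_⟩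
    show N *ᵥ (((1 : ℂ) - μ)⁻¹ • v) = v
    rw [Matrix.mulVec_smul, hNv, smul_smul, inv_mul_cancel₀ hμ1, one_smul]
  have : v ∈ (⊥ : Submodule ℂ (Fin n → ℂ)) := hinf ▸ Submodule.mem_inf.2 ⟨hvM, hvN⟩
  exact hvne (Submodule.mem_bot ℂ |>.mp this)

end RankAddAux

open RankAddAux in
/-- If A = B + C with B, C Hermitian, rank A = rank B + rank C, and A ⪰ 0,
then B ⪰ 0 and C ⪰ 0. -/
theorem posSemidef_of_rank_add (n : ℕ) (A B C : Matrix (Fin n) (Fin n) ℂ)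
    (hB : B.IsHermitian) (hC : C.IsHermitian) (hABC : A = B + C)
    (hrank : A.rank = B.rank + C.rank) (hA : A.PosSemidef) :
    B.PosSemidef ∧ C.PosSemidef := by
  classical
  have H : A.IsHermitian := hA.1
  obtain ⟨V, hV⟩ : ∃ v : Matrix (Fin n) (Fin n) ℂ, v = (Matrix.IsHermitian.eigenvectorUnitary H : Matrix (Fin n) (Fin n) ℂ) := ⟨_, rfl⟩
  obtain ⟨d, hd⟩ : ∃ f : Fin n → ℝ, f = H.eigenvalues := ⟨_, rfl⟩
  have hdnn : ∀ i, 0 ≤ d i := by rw [hd]; exact fun i => hA.eigenvalues_nonneg i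
  obtain ⟨Φ, hΦ⟩ : ∃ F : (Fin n → ℝ) → Matrix (Fin n) (Fin n) ℂ,
      F = fun g => V * Matrix.diagonal (fun i => (g i : ℂ)) * star V := ⟨_, rfl⟩
  have hVV : star V * V = 1 := by rw [hV]; exact Unitary.coe_star_mul_self _
  have hΦmul : ∀ g g', Φ g * Φ g' = Φ (fun i => g i * g' i) := by
    intro g g'
    rw [hΦ]
    show V * Matrix.diagonal (fun i => (g i : ℂ)) * star V *
        (V * Matrix.diagonal (fun i => (g' i : ℂ)) * star V) =
      V * Matrix.diagonal (fun i => ((g i * g' i : ℝ) : ℂ)) * star V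
    simp only [Matrix.mul_assoc]
    rw [← Matrix.mul_assoc (star V) V, hVV, Matrix.one_mul, ← Matrix.mul_assoc
      (Matrix.diagonal _) (Matrix.diagonal _), Matrix.diagonal_mul_diagonal]
    congr 2
    funext i
    push_cast
    rfl
  have hΦherm : ∀ g, (Φ g).IsHermitian := by
    intro g
    rw [hΦ]
    have hD : (Matrix.diagonal (fun i => (g i : ℂ)))ᴴ = Matrix.diagonal (fun i => (g i : ℂ)) := by
      ext i j
      simp only [Matrix.conjTranspose_apply, Matrix.diagonal_apply]
      rcases eq_or_ne i j with h | h
      · subst h; simp [Complex.conj_ofReal]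
      · simp [h, Ne.symm h]
    show (V * Matrix.diagonal (fun i => (g i : ℂ)) * star V)ᴴ =
      V * Matrix.diagonal (fun i => (g i : ℂ)) * star V
    rw [Matrix.conjTranspose_mul, Matrix.conjTranspose_mul, hD]
    have h1 : (star V)ᴴ = V := by
      rw [Matrix.star_eq_conjTranspose, Matrix.conjTranspose_conjTranspose]
    have h2 : Vᴴ = star V := rfl
    rw [h1, h2, Matrix.mul_assoc]
  have hAeq : A = Φ d := by
    rw [hΦ, hV, hd]
    exact H.spectral_theorem
  obtain ⟨sq, hsq⟩ : ∃ f : Fin n → ℝ, f = fun i => Real.sqrt (d i) := ⟨_, rfl⟩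
  obtain ⟨g, hg⟩ : ∃ f : Fin n → ℝ, f = fun i => if d i = 0 then 0 else (Real.sqrt (d i))⁻¹ := ⟨_, rfl⟩
  obtain ⟨q, hq⟩ : ∃ f : Fin n → ℝ, f = fun i => if d i = 0 then 0 else 1 := ⟨_, rfl⟩
  have hsqne : ∀ i, d i ≠ 0 → Real.sqrt (d i) ≠ 0 := by
    intro i hi
    exact Real.sqrt_ne_zero'.mpr (lt_of_le_of_ne (hdnn i) (Ne.symm hi))
  obtain ⟨R, hR⟩ : ∃ x : Matrix (Fin n) (Fin n) ℂ, x = Φ sq := ⟨_, rfl⟩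
  obtain ⟨P, hP⟩ : ∃ x : Matrix (Fin n) (Fin n) ℂ, x = Φ g := ⟨_, rfl⟩
  obtain ⟨Q, hQdef⟩ : ∃ x : Matrix (Fin n) (Fin n) ℂ, x = Φ q := ⟨_, rfl⟩
  have hRR : R * R = A := by
    rw [hR, hΦmul, hAeq]
    exact congrArg Φ (funext fun i => by rw [hsq]; exact Real.mul_self_sqrt (hdnn i))
  have hQA : Q * A = A := by
    rw [hAeq, hQdef, hΦmul]
    refine congrArg Φ (funext fun i => ?_)
    by_cases h : d i = 0
    · simp [hq, h]
    · simp [hq, h]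
  have hQP : Q * P = P := by
    rw [hQdef, hP, hΦmul]
    refine congrArg Φ (funext fun i => ?_)
    by_cases h : d i = 0
    · simp [hq, hg, h]
    · simp [hq, hg, h]
  have hQQ : Q * Q = Q := by
    rw [hQdef, hΦmul]
    refine congrArg Φ (funext fun i => ?_)
    by_cases h : d i = 0
    · simp [hq, h]
    · simp [hq, h]
  have hRP : R * P = Q := by
    rw [hR, hP, hΦmul, hQdef]
    refine congrArg Φ (funext fun i => ?_)
    by_cases h : d i = 0
    · simp [hsq, hg, hq, h]
    · simp [hsq, hg, hq, h, mul_inv_cancel₀ (hsqne i h)]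
  have hPR : P * R = Q := by
    rw [hR, hP, hΦmul, hQdef]
    refine congrArg Φ (funext fun i => ?_)
    by_cases h : d i = 0
    · simp [hsq, hg, hq, h]
    · simp [hsq, hg, hq, h, inv_mul_cancel₀ (hsqne i h)]
  have hPAP : P * A * P = Q := by
    rw [← hRR]
    calc P * (R * R) * P = (P * R) * (R * P) := by simp only [Matrix.mul_assoc]
      _ = Q * Q := by rw [hPR, hRP]
      _ = Q := hQQ
  have hrangesup : LinearMap.range A.mulVecLin =
      LinearMap.range B.mulVecLin ⊔ LinearMap.range C.mulVecLin := by
    have hle : LinearMap.range A.mulVecLin ≤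
        LinearMap.range B.mulVecLin ⊔ LinearMap.range C.mulVecLin := by
      rintro x ⟨y, rfl⟩
      refine Submodule.mem_sup.2 ⟨B *ᵥ y, ⟨y, rfl⟩, C *ᵥ y, ⟨y, rfl⟩, ?_⟩
      show B *ᵥ y + C *ᵥ y = A.mulVecLin y
      rw [← Matrix.add_mulVec, ← hABC]; rfl
    refine Submodule.eq_of_le_of_finrank_le hle ?_
    have h1 := Submodule.finrank_sup_add_finrank_inf_eq
      (LinearMap.range B.mulVecLin) (LinearMap.range C.mulVecLin)
    unfold Matrix.rank at hrank
    omega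
  have hrB : LinearMap.range B.mulVecLin ≤ LinearMap.range A.mulVecLin := by
    rw [hrangesup]; exact le_sup_left
  have hrC : LinearMap.range C.mulVecLin ≤ LinearMap.range A.mulVecLin := by
    rw [hrangesup]; exact le_sup_right
  have hQB : Q * B = B := mul_eq_self_of_range_le Q A B hQA hrB
  have hQC : Q * C = C := mul_eq_self_of_range_le Q A C hQA hrC
  have hQherm : Qᴴ = Q := by rw [hQdef]; exact (hΦherm q).eq
  have hPherm : Pᴴ = P := by rw [hP]; exact (hΦherm g).eq
  have hRherm : Rᴴ = R := by rw [hR]; exact (hΦherm sq).eq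
  have hBQ : B * Q = B := by
    have := congrArg Matrix.conjTranspose hQB
    rwa [Matrix.conjTranspose_mul, hB.eq, hQherm] at this
  have hCQ : C * Q = C := by
    have := congrArg Matrix.conjTranspose hQC
    rwa [Matrix.conjTranspose_mul, hC.eq, hQherm] at this
  obtain ⟨M, hM⟩ : ∃ x : Matrix (Fin n) (Fin n) ℂ, x = P * B * P := ⟨_, rfl⟩
  obtain ⟨N, hN⟩ : ∃ x : Matrix (Fin n) (Fin n) ℂ, x = P * C * P := ⟨_, rfl⟩
  have hMherm : M.IsHermitian := by
    show Mᴴ = M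
    rw [hM, Matrix.conjTranspose_mul, Matrix.conjTranspose_mul, hB.eq, hPherm,
      Matrix.mul_assoc]
  have hNherm : N.IsHermitian := by
    show Nᴴ = N
    rw [hN, Matrix.conjTranspose_mul, Matrix.conjTranspose_mul, hC.eq, hPherm,
      Matrix.mul_assoc]
  have hMN : M + N = Q := by
    rw [hM, hN, ← hPAP, hABC, Matrix.mul_add, Matrix.add_mul]
  have hNM : N + M = Q := by rw [add_comm]; exact hMN
  have hQM : Q * M = M := by
    rw [hM, ← Matrix.mul_assoc, ← Matrix.mul_assoc, hQP]
  have hQN : Q * N = N := by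
    rw [hN, ← Matrix.mul_assoc, ← Matrix.mul_assoc, hQP]
  have hRMR : R * M * R = B := by
    rw [hM]
    calc R * (P * B * P) * R = (R * P) * B * (P * R) := by simp only [Matrix.mul_assoc]
      _ = Q * B * Q := by rw [hRP, hPR]
      _ = B := by rw [hQB, hBQ]
  have hRNR : R * N * R = C := by
    rw [hN]
    calc R * (P * C * P) * R = (R * P) * C * (P * R) := by simp only [Matrix.mul_assoc]
      _ = Q * C * Q := by rw [hRP, hPR]
      _ = C := by rw [hQC, hCQ]
  have hrankM : M.rank = B.rank := by
    apply le_antisymm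
    · calc M.rank = (P * B * P).rank := by rw [hM]
        _ ≤ (P * B).rank := Matrix.rank_mul_le_left _ _
        _ ≤ B.rank := Matrix.rank_mul_le_right _ _
    · calc B.rank = (R * M * R).rank := by rw [hRMR]
        _ ≤ (R * M).rank := Matrix.rank_mul_le_left _ _
        _ ≤ M.rank := Matrix.rank_mul_le_right _ _
  have hrankN : N.rank = C.rank := by
    apply le_antisymm
    · calc N.rank = (P * C * P).rank := by rw [hN]
        _ ≤ (P * C).rank := Matrix.rank_mul_le_left _ _
        _ ≤ C.rank := Matrix.rank_mul_le_right _ _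
    · calc C.rank = (R * N * R).rank := by rw [hRNR]
        _ ≤ (R * N).rank := Matrix.rank_mul_le_left _ _
        _ ≤ N.rank := Matrix.rank_mul_le_right _ _
  have hrankQ : Q.rank = A.rank := by
    apply le_antisymm
    · calc Q.rank = (P * A * P).rank := by rw [hPAP]
        _ ≤ (P * A).rank := Matrix.rank_mul_le_left _ _
        _ ≤ A.rank := Matrix.rank_mul_le_right _ _
    · calc A.rank = (Q * A).rank := by rw [hQA]
        _ ≤ Q.rank := Matrix.rank_mul_le_left _ _
  have hrankMN : M.rank + N.rank = Q.rank := by rw [hrankM, hrankN, hrankQ, hrank]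
  have hMpsd : M.PosSemidef := posSemidef_of_sum_proj M N Q hMherm hMN hQM hrankMN
  have hNpsd : N.PosSemidef := posSemidef_of_sum_proj N M Q hNherm hNM hQN (by omega)
  constructor
  · have h := hMpsd.conjTranspose_mul_mul_same R
    rw [hRherm, hRMR] at h
    exact h
  · have h := hNpsd.conjTranspose_mul_mul_same R
    rw [hRherm, hRNR] at h
    exact h
end

section
/- For a positive semidefinite operator ρ on H_A ⊗ H_B with positive semidefinite partial transpose, if a product vector |a⟩⊗|b⟩ lies in the kernel of ρ, then |a*⟩⊗|b⟩ lies in the kernel of ρ^Γ, where |a*⟩ is the componentwise complex conjugate of |a⟩ in the fixed basis of H_A. -/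
open Matrix
open scoped ComplexOrder

/-- For a PPT state ρ, if |a,b⟩ ∈ ker ρ then |a*,b⟩ ∈ ker ρ^Γ. -/
theorem partialConj_mem_ker_ptranspose (M N : ℕ)
    (ρ : Matrix (Fin M × Fin N) (Fin M × Fin N) ℂ)
    (hρ : ρ.PosSemidef) (hρΓ : (ptranspose ρ).PosSemidef)
    (a : Fin M → ℂ) (b : Fin N → ℂ)
    (hker : ρ.mulVec (fun p => a p.1 * b p.2) = 0) :
    (ptranspose ρ).mulVec (fun p => star (a p.1) * b p.2) = 0 := by
  set v : Fin M × Fin N → ℂ := fun p => star (a p.1) * b p.2 with hv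
  set w : Fin M × Fin N → ℂ := fun p => a p.1 * b p.2 with hw
  rw [← hρΓ.dotProduct_mulVec_zero_iff]
  have key : star v ⬝ᵥ (ptranspose ρ) *ᵥ v = star w ⬝ᵥ ρ *ᵥ w := by
    let e : ((Fin M × Fin N) × (Fin M × Fin N)) ≃ ((Fin M × Fin N) × (Fin M × Fin N)) :=
      ⟨fun z => ((z.2.1, z.1.2), (z.1.1, z.2.2)), fun z => ((z.2.1, z.1.2), (z.1.1, z.2.2)),
        fun z => rfl, fun z => rfl⟩
    simp only [dotProduct, mulVec, Finset.mul_sum, ptranspose, Matrix.of_apply, hv, hw,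
      Pi.star_apply, star_mul', star_star]
    calc (∑ x : Fin M × Fin N, ∑ i : Fin M × Fin N,
            a x.1 * star (b x.2) * (ρ (i.1, x.2) (x.1, i.2) * (star (a i.1) * b i.2)))
        = ∑ z : (Fin M × Fin N) × (Fin M × Fin N),
            a z.1.1 * star (b z.1.2) * (ρ (z.2.1, z.1.2) (z.1.1, z.2.2) *
              (star (a z.2.1) * b z.2.2)) := by conv_rhs => rw [Fintype.sum_prod_type]
      _ = ∑ z : (Fin M × Fin N) × (Fin M × Fin N),
            star (a z.1.1) * star (b z.1.2) * (ρ z.1 z.2 * (a z.2.1 * b z.2.2)) := by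
            refine Fintype.sum_equiv e _ _ fun z => ?_
            simp only [e, Equiv.coe_fn_mk]
            ring
      _ = _ := by conv_lhs => rw [Fintype.sum_prod_type]
  rw [key, hker, dotProduct_zero]
end

section
/- (Extremality criterion, direction (iii)⇒(i).) Let ρ be a PPT state and H a Hermitian matrix, not a scalar multiple of ρ, such that the range of H is contained in the range of ρ and the range of H^Γ is contained in the range of ρ^Γ. Then there exists ε > 0 such that ρ − εH and ρ + εH are both PPT states (positive semidefinite with positive semidefinite partial transpose); in particular ρ is the sum of two non-proportional PPT states, so ρ is not extreme in the convex cone of PPT states. -/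
open Matrix
open scoped ComplexOrder

section Aux

variable {n : Type*} [Fintype n] [DecidableEq n]

lemma herm_dot_im {A : Matrix n n ℂ} (hA : A.IsHermitian) (x : n → ℂ) :
    (star x ⬝ᵥ A *ᵥ x).im = 0 := by
  apply Complex.conj_eq_iff_im.mp
  calc (starRingEnd ℂ) (star x ⬝ᵥ A *ᵥ x)
      = star (star x ⬝ᵥ A *ᵥ x) := rfl
    _ = star (A *ᵥ x) ⬝ᵥ x := (star_dotProduct _ _).symm
    _ = (star x ᵥ* Aᴴ) ⬝ᵥ x := by rw [star_mulVec]
    _ = (star x ᵥ* A) ⬝ᵥ x := by rw [hA.eq]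
    _ = star x ⬝ᵥ A *ᵥ x := (dotProduct_mulVec _ _ _).symm

lemma diag_perturb (d : n → ℝ) (hd : ∀ i, 0 ≤ d i) (H : Matrix n n ℂ) (hH : H.IsHermitian)
    (hcol : ∀ i, d i = 0 → ∀ j, H j i = 0) :
    ∃ ε : ℝ, 0 < ε ∧ ∀ δ : ℝ, |δ| ≤ ε →
      (Matrix.diagonal (fun i => (d i : ℂ)) + (δ : ℂ) • H).PosSemidef := by
  classical
  have hrow : ∀ i, d i = 0 → ∀ j, H i j = 0 := by
    intro i hi j
    rw [← hH.apply i j, hcol i hi j, star_zero]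
  set c : n → ℝ := fun i => ∑ j, ‖H i j‖ with hc
  have hc0 : ∀ i, 0 ≤ c i := fun i => Finset.sum_nonneg fun j _ => norm_nonneg _
  have hcd : ∀ i, c i ≠ 0 → 0 < d i := by
    intro i hci
    rcases (hd i).lt_or_eq with h | h
    · exact h
    · exact absurd (by simp [hc, fun j => hrow i h.symm j]) hci
  obtain ⟨ε, hε, hεc⟩ : ∃ ε : ℝ, 0 < ε ∧ ∀ i, ε * c i ≤ d i := by
    by_cases hne : Nonempty n
    · set F : n → ℝ := fun i => if c i = 0 then 1 else d i / c i with hF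
      have hFpos : ∀ i, 0 < F i := by
        intro i
        by_cases h : c i = 0
        · simp [hF, h]
        · simp only [hF, h, if_false]
          exact div_pos (hcd i h) (lt_of_le_of_ne (hc0 i) (Ne.symm h))
      refine ⟨Finset.univ.inf' Finset.univ_nonempty F, ?_, ?_⟩
      · exact (Finset.lt_inf'_iff _).mpr fun i _ => hFpos i
      · intro i
        by_cases h : c i = 0
        · simp [h, hd i]
        · have h1 : Finset.univ.inf' Finset.univ_nonempty F ≤ F i :=
            Finset.inf'_le _ (Finset.mem_univ i)
          have h2 : F i = d i / c i := by simp [hF, h]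
          have hcpos : 0 < c i := lt_of_le_of_ne (hc0 i) (Ne.symm h)
          calc Finset.univ.inf' Finset.univ_nonempty F * c i
              ≤ (d i / c i) * c i := by
                exact mul_le_mul_of_nonneg_right (h2 ▸ h1) (hc0 i)
            _ = d i := div_mul_cancel₀ _ (ne_of_gt hcpos)
    · exact ⟨1, one_pos, fun i => absurd ⟨i⟩ hne⟩
  refine ⟨ε, hε, fun δ hδ => ?_⟩
  have hHerm : (Matrix.diagonal (fun i => (d i : ℂ)) + (δ : ℂ) • H).IsHermitian := by
    show _ᴴ = _
    ext i j
    simp only [conjTranspose_apply, Matrix.add_apply, Matrix.smul_apply, diagonal_apply,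
      star_add, smul_eq_mul]
    have e2 : star ((δ : ℂ) * H j i) = (δ : ℂ) * H i j := by
      rw [star_mul', hH.apply i j, Complex.star_def, Complex.conj_ofReal]
    rw [e2]
    congr 1
    by_cases h : i = j
    · subst h; simp [Complex.star_def, Complex.conj_ofReal]
    · simp [h, Ne.symm h]
  refine PosSemidef.of_dotProduct_mulVec_nonneg hHerm fun x => ?_
  set z := star x ⬝ᵥ H *ᵥ x with hz
  have him : z.im = 0 := herm_dot_im hH x
  have hDx : star x ⬝ᵥ (Matrix.diagonal fun i => (d i : ℂ)) *ᵥ x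
      = ((∑ i, d i * ‖x i‖ ^ 2 : ℝ) : ℂ) := by
    rw [dotProduct]
    push_cast
    refine Finset.sum_congr rfl fun i _ => ?_
    rw [mulVec_diagonal]
    have : ((‖x i‖ : ℂ)) ^ 2 = (starRingEnd ℂ) (x i) * x i := by
      rw [← Complex.normSq_eq_conj_mul_self]
      norm_cast
      exact (Complex.sq_norm _)
    rw [this]
    simp only [Pi.star_apply, Complex.star_def]
    ring
  rw [add_mulVec, dotProduct_add, smul_mulVec, dotProduct_smul, hDx, ← hz, smul_eq_mul]
  rw [Complex.le_def]
  have hre : ((δ : ℂ) * z).re = δ * z.re := Complex.re_ofReal_mul δ z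
  have him2 : ((δ : ℂ) * z).im = δ * z.im := Complex.im_ofReal_mul δ z
  constructor
  swap
  · simp [him2, him, ← Complex.ofReal_pow]
  simp only [Complex.add_re, Complex.ofReal_re, hre, Complex.zero_re]
  -- key bound
  set A : n → ℝ := fun i => ‖x i‖ with hA
  have hbound : |z.re| ≤ ∑ i, c i * A i ^ 2 := by
    have h1 : ‖z‖ ≤ ∑ i, ∑ j, ‖H i j‖ * (A i * A j) := by
      rw [hz, dotProduct]
      refine le_trans (norm_sum_le _ _) (Finset.sum_le_sum fun i _ => ?_)
      rw [norm_mul]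
      have : ‖star x i‖ = A i := by
        simp [hA, Pi.star_apply, Complex.star_def]
      rw [this, mulVec]
      calc A i * ‖dotProduct (H i) x‖
          ≤ A i * ∑ j, ‖H i j * x j‖ := by
            refine mul_le_mul_of_nonneg_left ?_ (norm_nonneg _)
            exact norm_sum_le _ _
        _ = ∑ j, ‖H i j‖ * (A i * A j) := by
            rw [Finset.mul_sum]
            refine Finset.sum_congr rfl fun j _ => ?_
            rw [norm_mul]; ring
    have h2 : ∑ i, ∑ j, ‖H i j‖ * (A i * A j) ≤ ∑ i, c i * A i ^ 2 := by
      have step1 : ∑ i, ∑ j, ‖H i j‖ * (A i * A j)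
          ≤ ∑ i, ∑ j, ‖H i j‖ * ((A i ^ 2 + A j ^ 2) / 2) := by
        refine Finset.sum_le_sum fun i _ => Finset.sum_le_sum fun j _ => ?_
        refine mul_le_mul_of_nonneg_left ?_ (norm_nonneg _)
        nlinarith [sq_nonneg (A i - A j)]
      have step2 : ∑ i, ∑ j, ‖H i j‖ * ((A i ^ 2 + A j ^ 2) / 2)
          = ∑ i, c i * A i ^ 2 := by
        have habsymm : ∀ i j, ‖H i j‖ = ‖H j i‖ := by
          intro i j
          rw [← hH.apply i j, Complex.star_def, Complex.norm_conj]
        have e0 : ∑ i, ∑ j, ‖H i j‖ * ((A i ^ 2 + A j ^ 2) / 2)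
            = ∑ i, ((∑ j, ‖H i j‖ * A i ^ 2 / 2)
              + (∑ j, ‖H i j‖ * A j ^ 2 / 2)) := by
          refine Finset.sum_congr rfl fun i _ => ?_
          rw [← Finset.sum_add_distrib]
          exact Finset.sum_congr rfl fun j _ => by ring
        have f1 : ∀ i, (∑ j, ‖H i j‖ * A i ^ 2 / 2) = c i * A i ^ 2 / 2 := by
          intro i
          rw [← Finset.sum_div, ← Finset.sum_mul]
        have f2 : ∀ i, (∑ j, ‖H i j‖ * A j ^ 2 / 2)
            = ∑ j, ‖H j i‖ * A j ^ 2 / 2 := by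
          intro i
          exact Finset.sum_congr rfl fun j _ => by rw [habsymm i j]
        rw [e0, Finset.sum_add_distrib]
        have f3 : ∑ i, ∑ j, ‖H j i‖ * A j ^ 2 / 2
            = ∑ i, c i * A i ^ 2 / 2 := by
          rw [Finset.sum_comm]
          refine Finset.sum_congr rfl fun j _ => ?_
          rw [← Finset.sum_div, ← Finset.sum_mul]
        rw [Finset.sum_congr rfl fun i _ => f1 i, Finset.sum_congr rfl fun i _ => f2 i, f3,
          ← Finset.sum_add_distrib]
        exact Finset.sum_congr rfl fun i _ => by ring
      exact step1.trans_eq step2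
    exact (Complex.abs_re_le_norm z).trans (h1.trans h2)
  have hfin : ε * ∑ i, c i * A i ^ 2 ≤ ∑ i, d i * A i ^ 2 := by
    rw [Finset.mul_sum]
    refine Finset.sum_le_sum fun i _ => ?_
    rw [← mul_assoc]
    exact mul_le_mul_of_nonneg_right (hεc i) (sq_nonneg _)
  have h5 : |δ * z.re| ≤ ∑ i, d i * A i ^ 2 := by
    rw [abs_mul]
    calc |δ| * |z.re| ≤ ε * ∑ i, c i * A i ^ 2 :=
          mul_le_mul hδ hbound (abs_nonneg _) (le_of_lt hε)
      _ ≤ ∑ i, d i * A i ^ 2 := hfin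
  have := neg_abs_le (δ * z.re)
  linarith

lemma perturb (ρ H : Matrix n n ℂ) (hρ : ρ.PosSemidef) (hH : H.IsHermitian)
    (hker : ∀ x, ρ *ᵥ x = 0 → H *ᵥ x = 0) :
    ∃ ε : ℝ, 0 < ε ∧ ∀ δ : ℝ, |δ| ≤ ε → (ρ + (δ : ℂ) • H).PosSemidef := by
  classical
  set U : Matrix n n ℂ := (hρ.1.eigenvectorUnitary : Matrix n n ℂ) with hU
  have h1 : star U * U = 1 := Matrix.mem_unitaryGroup_iff'.mp hρ.1.eigenvectorUnitary.2
  have h2 : U * star U = 1 := Matrix.mem_unitaryGroup_iff.mp hρ.1.eigenvectorUnitary.2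
  set d : n → ℝ := hρ.1.eigenvalues with hdd
  have hd : ∀ i, 0 ≤ d i := fun i => hρ.eigenvalues_nonneg i
  set D : Matrix n n ℂ := Matrix.diagonal (fun i => (d i : ℂ)) with hD
  have hspec : ρ = U * D * star U := hρ.1.spectral_theorem
  set H' : Matrix n n ℂ := star U * H * U with hH'def
  have hH' : H'.IsHermitian := by
    show H'ᴴ = H'
    rw [hH'def]
    rw [conjTranspose_mul, conjTranspose_mul, hH.eq, star_eq_conjTranspose,
      conjTranspose_conjTranspose, mul_assoc]
  have hcol : ∀ i, d i = 0 → ∀ j, H' j i = 0 := by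
    intro i hi j
    have hρU : ρ * U = U * D := by
      rw [hspec, mul_assoc, h1, mul_one]
    have hv : ρ *ᵥ (U *ᵥ Pi.single i 1) = 0 := by
      rw [mulVec_mulVec, hρU, ← mulVec_mulVec, hD, diagonal_mulVec_single, hi]
      simp
    have hHv := hker _ hv
    have hz : H' *ᵥ Pi.single i 1 = 0 := by
      rw [hH'def, ← mulVec_mulVec, ← mulVec_mulVec, hHv, mulVec_zero]
    calc H' j i = (H' *ᵥ Pi.single i 1) j := by simp [mulVec_single]
      _ = 0 := by rw [hz]; rfl
  obtain ⟨ε, hε, hkey⟩ := diag_perturb d hd H' hH' hcol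
  refine ⟨ε, hε, fun δ hδ => ?_⟩
  have h3 := (hkey δ hδ).mul_mul_conjTranspose_same U
  have h4 : U * (D + (δ : ℂ) • H') * Uᴴ = ρ + (δ : ℂ) • H := by
    rw [← star_eq_conjTranspose, mul_add, add_mul, ← hspec]
    congr 1
    rw [mul_smul_comm, smul_mul_assoc]
    refine congrArg _ ?_
    rw [hH'def]
    calc U * (star U * H * U) * star U = (U * star U) * H * (U * star U) := by
          simp only [mul_assoc]
      _ = H := by rw [h2, one_mul, mul_one]
  rwa [h4] at h3

lemma ker_of_range (ρ H : Matrix n n ℂ) (hρ : ρ.IsHermitian) (hH : H.IsHermitian)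
    (hr : LinearMap.range H.mulVecLin ≤ LinearMap.range ρ.mulVecLin) :
    ∀ x, ρ *ᵥ x = 0 → H *ᵥ x = 0 := by
  intro x hx
  have key : ∀ w, star x ⬝ᵥ ρ *ᵥ w = 0 := by
    intro w
    rw [dotProduct_mulVec]
    have : star x ᵥ* ρ = 0 := by
      rw [← hρ.eq, ← star_mulVec, hx, star_zero]
    rw [this, zero_dotProduct]
  obtain ⟨w, hw⟩ : ∃ w, ρ *ᵥ w = H *ᵥ (H *ᵥ x) := by
    have : H *ᵥ (H *ᵥ x) ∈ LinearMap.range H.mulVecLin := ⟨H *ᵥ x, rfl⟩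
    obtain ⟨w, hw⟩ := hr this
    exact ⟨w, hw⟩
  have hzero : star (H *ᵥ x) ⬝ᵥ (H *ᵥ x) = 0 := by
    rw [star_mulVec, hH.eq, ← dotProduct_mulVec, ← hw]
    exact key w
  exact dotProduct_star_self_eq_zero.mp hzero

lemma psd_smul_real {A : Matrix n n ℂ} (hA : A.PosSemidef) {r : ℝ} (hr : 0 ≤ r) :
    ((r : ℂ) • A).PosSemidef := by
  refine PosSemidef.of_dotProduct_mulVec_nonneg ?_ ?_
  · show _ᴴ = _
    rw [conjTranspose_smul, hA.1.eq, Complex.star_def, Complex.conj_ofReal]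
  · intro x
    rw [smul_mulVec, dotProduct_smul, smul_eq_mul]
    exact mul_nonneg (by exact_mod_cast Complex.zero_le_real.mpr hr) (hA.dotProduct_mulVec_nonneg x)

end Aux

section PT

variable {M N : ℕ}

lemma ptranspose_add (A B : Matrix (Fin M × Fin N) (Fin M × Fin N) ℂ) :
    ptranspose (A + B) = ptranspose A + ptranspose B := rfl

lemma ptranspose_smul (c : ℂ) (A : Matrix (Fin M × Fin N) (Fin M × Fin N) ℂ) :
    ptranspose (c • A) = c • ptranspose A := rfl

lemma ptranspose_sub (A B : Matrix (Fin M × Fin N) (Fin M × Fin N) ℂ) :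
    ptranspose (A - B) = ptranspose A - ptranspose B := rfl

lemma ptranspose_herm {A : Matrix (Fin M × Fin N) (Fin M × Fin N) ℂ} (hA : A.IsHermitian) :
    (ptranspose A).IsHermitian := by
  show _ᴴ = _
  ext p q
  simp only [conjTranspose_apply, ptranspose, Matrix.of_apply]
  exact hA.apply _ _

end PT

/-- Extremality criterion, direction (iii) ⇒ (i): if H is Hermitian, not a scalar
multiple of the PPT state ρ, with range H ⊆ range ρ and range H^Γ ⊆ range ρ^Γ,
then for some ε > 0 both ρ ± εH are PPT states, and ρ is a sum of two
non-proportional PPT states (hence not extreme). -/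
theorem not_extreme_of_hermitian_range_le (M N : ℕ)
    (ρ H : Matrix (Fin M × Fin N) (Fin M × Fin N) ℂ)
    (hρ0 : ρ ≠ 0) (hρ : ρ.PosSemidef) (hρΓ : (ptranspose ρ).PosSemidef)
    (hH : H.IsHermitian) (hprop : ¬ ∃ c : ℂ, H = c • ρ)
    (hr : LinearMap.range H.mulVecLin ≤ LinearMap.range ρ.mulVecLin)
    (hrΓ : LinearMap.range (ptranspose H).mulVecLin ≤
      LinearMap.range (ptranspose ρ).mulVecLin) :
    (∃ ε : ℝ, 0 < ε ∧
      (ρ - (ε : ℂ) • H).PosSemidef ∧ (ptranspose (ρ - (ε : ℂ) • H)).PosSemidef ∧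
      (ρ + (ε : ℂ) • H).PosSemidef ∧ (ptranspose (ρ + (ε : ℂ) • H)).PosSemidef) ∧
    ∃ ρ₁ ρ₂ : Matrix (Fin M × Fin N) (Fin M × Fin N) ℂ,
      ρ₁ ≠ 0 ∧ ρ₁.PosSemidef ∧ (ptranspose ρ₁).PosSemidef ∧
      ρ₂ ≠ 0 ∧ ρ₂.PosSemidef ∧ (ptranspose ρ₂).PosSemidef ∧
      ρ = ρ₁ + ρ₂ ∧ ¬ ∃ c : ℂ, ρ₁ = c • ρ₂ := by
  classical
  have hker1 : ∀ x, ρ *ᵥ x = 0 → H *ᵥ x = 0 := ker_of_range ρ H hρ.1 hH hr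
  have hker2 : ∀ x, (ptranspose ρ) *ᵥ x = 0 → (ptranspose H) *ᵥ x = 0 :=
    ker_of_range _ _ hρΓ.1 (ptranspose_herm hH) hrΓ
  obtain ⟨ε₁, hε₁, hP1⟩ := perturb ρ H hρ hH hker1
  obtain ⟨ε₂, hε₂, hP2⟩ := perturb _ _ hρΓ (ptranspose_herm hH) hker2
  set ε : ℝ := min ε₁ ε₂ with hεdef
  have hεpos : 0 < ε := lt_min hε₁ hε₂
  have ha1 : |ε| ≤ ε₁ := by rw [abs_of_pos hεpos]; exact min_le_left _ _
  have ha2 : |ε| ≤ ε₂ := by rw [abs_of_pos hεpos]; exact min_le_right _ _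
  have hb1 : |(-ε)| ≤ ε₁ := by rwa [abs_neg]
  have hb2 : |(-ε)| ≤ ε₂ := by rwa [abs_neg]
  have esub : ∀ X Y : Matrix (Fin M × Fin N) (Fin M × Fin N) ℂ,
      X + (((-ε : ℝ)) : ℂ) • Y = X - (ε : ℂ) • Y := by
    intro X Y
    push_cast
    rw [neg_smul, ← sub_eq_add_neg]
  have psd_sub : (ρ - (ε : ℂ) • H).PosSemidef := by
    rw [← esub]; exact hP1 (-ε) hb1
  have psd_add : (ρ + (ε : ℂ) • H).PosSemidef := hP1 ε ha1
  have pt_sub : ptranspose (ρ - (ε : ℂ) • H) = ptranspose ρ - (ε : ℂ) • ptranspose H := by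
    rw [ptranspose_sub, ptranspose_smul]
  have pt_add : ptranspose (ρ + (ε : ℂ) • H) = ptranspose ρ + (ε : ℂ) • ptranspose H := by
    rw [ptranspose_add, ptranspose_smul]
  have psd_ptsub : (ptranspose (ρ - (ε : ℂ) • H)).PosSemidef := by
    rw [pt_sub, ← esub]; exact hP2 (-ε) hb2
  have psd_ptadd : (ptranspose (ρ + (ε : ℂ) • H)).PosSemidef := by
    rw [pt_add]; exact hP2 ε ha2
  have hεC : ((ε : ℂ)) ≠ 0 := Complex.ofReal_ne_zero.mpr (ne_of_gt hεpos)
  refine ⟨⟨ε, hεpos, psd_sub, psd_ptsub, psd_add, psd_ptadd⟩, ?_⟩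
  refine ⟨((1/2 : ℝ) : ℂ) • (ρ - (ε : ℂ) • H), ((1/2 : ℝ) : ℂ) • (ρ + (ε : ℂ) • H),
    ?_, psd_smul_real psd_sub (by norm_num), ?_, ?_, psd_smul_real psd_add (by norm_num),
    ?_, ?_, ?_⟩
  · -- ρ₁ ≠ 0
    intro h
    have h0 : ρ - (ε : ℂ) • H = 0 := by
      have := smul_eq_zero.mp h
      rcases this with h | h
      · norm_num at h
      · exact h
    have hρε : ρ = (ε : ℂ) • H := by
      rwa [sub_eq_zero] at h0
    refine hprop ⟨(ε : ℂ)⁻¹, ?_⟩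
    rw [hρε, smul_smul, inv_mul_cancel₀ hεC, one_smul]
  · rw [ptranspose_smul]
    exact psd_smul_real psd_ptsub (by norm_num)
  · -- ρ₂ ≠ 0
    intro h
    have h0 : ρ + (ε : ℂ) • H = 0 := by
      rcases smul_eq_zero.mp h with h | h
      · norm_num at h
      · exact h
    have hρε : ρ = (-(ε : ℂ)) • H := by
      rw [neg_smul, eq_neg_iff_add_eq_zero]; exact h0
    refine hprop ⟨(-(ε : ℂ))⁻¹, ?_⟩
    rw [hρε, smul_smul, inv_mul_cancel₀ (neg_ne_zero.mpr hεC), one_smul]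
  · rw [ptranspose_smul]
    exact psd_smul_real psd_ptadd (by norm_num)
  · -- sum
    rw [← smul_add]
    have : (ρ - (ε : ℂ) • H) + (ρ + (ε : ℂ) • H) = (2 : ℂ) • ρ := by
      rw [two_smul]; abel
    rw [this, smul_smul]
    norm_num
  · -- non-proportional
    rintro ⟨c, hc⟩
    have hc' : ρ - (ε : ℂ) • H = c • (ρ + (ε : ℂ) • H) := by
      have hhne : ((1/2 : ℝ) : ℂ) ≠ 0 := by norm_num
      rw [smul_comm] at hc
      exact smul_right_injective _ hhne hc
    have h5 : (1 - c) • ρ = ((c + 1) * (ε : ℂ)) • H := by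
      have hexp : ρ - (ε : ℂ) • H = c • ρ + (c * (ε : ℂ)) • H := by
        rw [hc', smul_add, smul_smul]
      calc (1 - c) • ρ = (ρ - (ε : ℂ) • H) - c • ρ + (ε : ℂ) • H := by module
        _ = (c • ρ + (c * (ε : ℂ)) • H) - c • ρ + (ε : ℂ) • H := by rw [hexp]
        _ = ((c + 1) * (ε : ℂ)) • H := by module
    by_cases hc1 : c = -1
    · rw [hc1] at h5
      have h6 : (2 : ℂ) • ρ = 0 := by
        rw [show (1 - (-1 : ℂ)) = 2 from by norm_num] at h5
        rw [h5, show ((-1 : ℂ) + 1) = 0 from by norm_num, zero_mul, zero_smul]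
      have : ρ = 0 := by
        rcases smul_eq_zero.mp h6 with h | h
        · norm_num at h
        · exact h
      exact hρ0 this
    · have hne : ((c + 1) * (ε : ℂ)) ≠ 0 := by
        refine mul_ne_zero ?_ hεC
        intro h
        exact hc1 (by linear_combination h)
      have hHval : H = (((c + 1) * (ε : ℂ))⁻¹ * (1 - c)) • ρ := by
        have := congrArg (fun X => ((c + 1) * (ε : ℂ))⁻¹ • X) h5.symm
        simp only [smul_smul, inv_mul_cancel₀ hne, one_smul] at this
        exact this
      exact hprop ⟨_, hHval⟩
end

section
/- If ρ is a pure PPT state on H_A ⊗ H_B (i.e., ρ = |ψ⟩⟨ψ| with ρ^Γ positive semidefinite), then |ψ⟩ is a product vector; hence the extreme points of rank one of the set of PPT states are exactly the pure product states. -/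
open Matrix
open scoped ComplexOrder

/-- The set of (normalized) PPT states. -/
def pptStates (M N : ℕ) : Set (Matrix (Fin M × Fin N) (Fin M × Fin N) ℂ) :=
  {ρ | ρ.PosSemidef ∧ (ptranspose ρ).PosSemidef ∧ ρ.trace = 1}

section Aux

variable {n : Type*} [Fintype n] [DecidableEq n]

lemma psd_det_nonneg {A : Matrix n n ℂ} (hA : A.PosSemidef) : 0 ≤ A.det := by
  rw [hA.isHermitian.det_eq_prod_eigenvalues]
  refine Finset.prod_nonneg fun i _ => ?_
  simpa using hA.eigenvalues_nonneg i

lemma outer_mulVec (v x : n → ℂ) :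
    (Matrix.of fun p q => v p * star (v q)) *ᵥ x = (star v ⬝ᵥ x) • v := by
  funext p
  simp only [Matrix.mulVec, Matrix.of_apply, dotProduct, Pi.smul_apply, smul_eq_mul,
    Pi.star_apply, Finset.sum_mul]
  exact Finset.sum_congr rfl fun q _ => by ring

lemma star_dotProduct_comm (v x : n → ℂ) : star (star v ⬝ᵥ x) = star x ⬝ᵥ v := by
  simp [dotProduct, mul_comm]

lemma outer_psd (v : n → ℂ) : (Matrix.of fun p q => v p * star (v q)).PosSemidef := by
  refine Matrix.PosSemidef.of_dotProduct_mulVec_nonneg ?_ ?_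
  · ext p q
    simp [Matrix.conjTranspose_apply, mul_comm]
  · intro x
    rw [outer_mulVec, dotProduct_smul, smul_eq_mul, ← star_dotProduct_comm]
    exact star_mul_self_nonneg (star x ⬝ᵥ v)

lemma outer_trace (v : n → ℂ) :
    (Matrix.of fun p q => v p * star (v q)).trace = star v ⬝ᵥ v := by
  simp [Matrix.trace, Matrix.diag, dotProduct, mul_comm]

lemma outer_quad (v x : n → ℂ) :
    star x ⬝ᵥ ((Matrix.of fun p q => v p * star (v q)) *ᵥ x)
      = (star v ⬝ᵥ x) * star (star v ⬝ᵥ x) := by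
  rw [outer_mulVec, dotProduct_smul, smul_eq_mul, star_dotProduct_comm]

end Aux

lemma minors_vanish {M N : ℕ} {ψ : Fin M × Fin N → ℂ}
    (hppt : (ptranspose (Matrix.of fun p q => ψ p * star (ψ q))).PosSemidef)
    (i k : Fin M) (j l : Fin N) :
    ψ (i, j) * ψ (k, l) = ψ (i, l) * ψ (k, j) := by
  have hsub := hppt.submatrix ![(i, j), (i, l), (k, j), (k, l)]
  have hdet := psd_det_nonneg hsub
  set a := ψ (i, j) with ha
  set b := ψ (i, l) with hb
  set c := ψ (k, j) with hc
  set d := ψ (k, l) with hd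
  set T : Matrix (Fin 4) (Fin 4) ℂ :=
    !![a * star a, a * star b, c * star a, c * star b;
       b * star a, b * star b, d * star a, d * star b;
       a * star c, a * star d, c * star c, c * star d;
       b * star c, b * star d, d * star c, d * star d] with hT
  have heq : ((ptranspose (Matrix.of fun p q => ψ p * star (ψ q))).submatrix
      ![(i, j), (i, l), (k, j), (k, l)] ![(i, j), (i, l), (k, j), (k, l)]) = T := by
    ext p q
    fin_cases p <;> fin_cases q <;> rfl
  have hD : T.det = -(((a * d - b * c) * star (a * d - b * c)) ^ 2) := by
    have e1 : ((1 : Fin 4).succAbove 2) = 3 := rfl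
    have e2 : ((2 : Fin 4).succAbove 2) = 3 := rfl
    have e3 : (Fin.castSucc 2 : Fin 4) = 2 := rfl
    have e4 : ((3 : Fin 4).succAbove 2) = 2 := rfl
    simp [hT, Matrix.det_succ_row_zero, Fin.sum_univ_succ, star_sub, star_mul', e1, e2, e3, e4]
    ring
  rw [heq] at hdet
  rw [hD] at hdet
  have h1 : (a * d - b * c) * star (a * d - b * c)
      = (Complex.normSq (a * d - b * c) : ℂ) := Complex.mul_conj _
  rw [h1] at hdet
  have h2 : ((Complex.normSq (a * d - b * c) ^ 2 : ℝ) : ℂ) ≤ 0 := by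
    rw [← neg_nonneg]
    push_cast
    exact hdet
  have h3 : (Complex.normSq (a * d - b * c)) ^ 2 ≤ 0 := by exact_mod_cast h2
  have h4 : Complex.normSq (a * d - b * c) = 0 := by
    nlinarith [Complex.normSq_nonneg (a * d - b * c), sq_nonneg (Complex.normSq (a * d - b * c))]
  have h5 := Complex.normSq_eq_zero.mp h4
  exact sub_eq_zero.mp h5

lemma product_of_minors {M N : ℕ} {ψ : Fin M × Fin N → ℂ} (hne : ψ ≠ 0)
    (hmin : ∀ (i k : Fin M) (j l : Fin N), ψ (i, j) * ψ (k, l) = ψ (i, l) * ψ (k, j)) :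
    ∃ (a : Fin M → ℂ) (b : Fin N → ℂ), ψ = fun p => a p.1 * b p.2 := by
  obtain ⟨p0, hp0⟩ : ∃ p, ψ p ≠ 0 := by
    by_contra h
    push_neg at h
    exact hne (funext h)
  refine ⟨fun i => ψ (i, p0.2), fun j => ψ (p0.1, j) / ψ p0, ?_⟩
  funext p
  have hm := hmin p.1 p0.1 p.2 p0.2
  have hψp : ψ (p.1, p.2) = ψ p := by rw [Prod.mk.eta]
  have hψ0 : ψ (p0.1, p0.2) = ψ p0 := by rw [Prod.mk.eta]
  rw [hψp, hψ0] at hm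
  field_simp
  linear_combination hm


lemma psd_rank_one_outer {n : Type*} [Fintype n] [DecidableEq n]
    {ρ : Matrix n n ℂ} (hρ : ρ.PosSemidef) (htr : ρ.trace = 1) (hrk : ρ.rank = 1) :
    ∃ φ : n → ℂ, ρ = Matrix.of fun p q => φ p * star (φ q) := by
  obtain ⟨p0, hp0⟩ : ∃ p, ρ p p ≠ 0 := by
    by_contra h
    push_neg at h
    have h0 : ρ.trace = 0 := by simp [Matrix.trace, Matrix.diag, h]
    rw [htr] at h0
    exact one_ne_zero h0
  have key : star (Pi.single p0 1 : n → ℂ) ⬝ᵥ ρ *ᵥ (Pi.single p0 1) = ρ p0 p0 := by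
    rw [Matrix.mulVec_single]
    simp [dotProduct, Pi.single_apply, apply_ite]
  have hc0 : (0 : ℂ) ≤ ρ p0 p0 := key ▸ hρ.dotProduct_mulVec_nonneg (Pi.single p0 1)
  set c := ρ p0 p0 with hcdef
  obtain ⟨hre, him⟩ := Complex.nonneg_iff.mp hc0
  have hrne : c.re ≠ 0 := fun h => hp0 (Complex.ext (by simpa using h) (by simp [← him]))
  have hrepos : 0 < c.re := lt_of_le_of_ne hre (Ne.symm hrne)
  set r : ℝ := Real.sqrt c.re with hrdef
  have hrpos : 0 < r := Real.sqrt_pos.mpr hrepos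
  have hrC : ((r : ℝ) : ℂ) ≠ 0 := Complex.ofReal_ne_zero.mpr hrpos.ne'
  have hrr : ((r : ℝ) : ℂ) * ((r : ℝ) : ℂ) = c := by
    rw [← Complex.ofReal_mul, hrdef, Real.mul_self_sqrt hre]
    exact Complex.ext rfl (by simp [← him])
  set u : n → ℂ := fun p => ρ p p0 with hu
  have hune : u ≠ 0 := fun h => hp0 (by simpa [hu] using congrFun h p0)
  have humem : u ∈ LinearMap.range ρ.mulVecLin :=
    ⟨Pi.single p0 1, by funext p; simp [Matrix.mulVecLin_apply, hu]⟩
  have hspan : Submodule.span ℂ {u} = LinearMap.range ρ.mulVecLin := by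
    apply Submodule.eq_of_le_of_finrank_eq
    · rwa [Submodule.span_singleton_le_iff_mem]
    · rw [finrank_span_singleton hune]
      exact hrk.symm
  have hcol : ∀ q, ∃ t : ℂ, (fun p => ρ p q) = t • u := by
    intro q
    have hqmem : (fun p => ρ p q) ∈ LinearMap.range ρ.mulVecLin :=
      ⟨Pi.single q 1, by funext p; simp [Matrix.mulVecLin_apply]⟩
    rw [← hspan, Submodule.mem_span_singleton] at hqmem
    obtain ⟨t, ht⟩ := hqmem
    exact ⟨t, ht.symm⟩
  refine ⟨fun p => ρ p p0 / ((r : ℝ) : ℂ), ?_⟩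
  ext p q
  obtain ⟨t, ht⟩ := hcol q
  have h1 : ρ p q = t * ρ p p0 := by
    have h := congrFun ht p
    simpa [hu] using h
  have h2 : ρ p0 q = t * c := by
    have h := congrFun ht p0
    simpa [hu, ← hcdef] using h
  have hherm : star (ρ q p0) = ρ p0 q := by
    have h := congrFun (congrFun hρ.1 p0) q
    simpa [Matrix.conjTranspose_apply] using h
  have hstarr : star (((r : ℝ) : ℂ)) = ((r : ℝ) : ℂ) := by
    simp [Complex.star_def, Complex.conj_ofReal]
  rw [Matrix.of_apply, h1, star_div₀, hherm, hstarr, h2]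
  have hcne : c ≠ 0 := hp0
  field_simp
  linear_combination t * ρ p p0 * hrr

lemma pure_state_extreme_aux {n : Type*} [Fintype n] [DecidableEq n]
    {v : n → ℂ} (hv : star v ⬝ᵥ v = 1)
    {σ τ : Matrix n n ℂ} (hσ : σ.PosSemidef) (hσt : σ.trace = 1) (hτ : τ.PosSemidef)
    {s t : ℝ} (hs : 0 < s) (ht : 0 < t)
    (hsum : s • σ + t • τ = Matrix.of fun p q => v p * star (v q)) :
    σ = Matrix.of fun p q => v p * star (v q) := by
  have hsum' : ((s : ℝ) : ℂ) • σ + ((t : ℝ) : ℂ) • τ = Matrix.of fun p q => v p * star (v q) := by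
    rw [← hsum]
    congr 1 <;> ext p q <;> simp [Complex.real_smul]
  have hker : ∀ x : n → ℂ, star v ⬝ᵥ x = 0 → σ *ᵥ x = 0 := by
    intro x hx
    have hq : star x ⬝ᵥ ((Matrix.of fun p q => v p * star (v q)) *ᵥ x) = 0 := by
      rw [outer_quad, hx]
      simp
    have hexp : ((s : ℝ) : ℂ) * (star x ⬝ᵥ σ *ᵥ x) + ((t : ℝ) : ℂ) * (star x ⬝ᵥ τ *ᵥ x) = 0 := by
      rw [← hq, ← hsum', Matrix.add_mulVec, Matrix.smul_mulVec, Matrix.smul_mulVec,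
        dotProduct_add, dotProduct_smul, dotProduct_smul, smul_eq_mul, smul_eq_mul]
    obtain ⟨hσre, hσim⟩ := Complex.nonneg_iff.mp (hσ.dotProduct_mulVec_nonneg x)
    obtain ⟨hτre, hτim⟩ := Complex.nonneg_iff.mp (hτ.dotProduct_mulVec_nonneg x)
    have hre : s * (star x ⬝ᵥ σ *ᵥ x).re + t * (star x ⬝ᵥ τ *ᵥ x).re = 0 := by
      have := congrArg Complex.re hexp
      simpa [Complex.mul_re] using this
    have hσzero : (star x ⬝ᵥ σ *ᵥ x).re = 0 := by nlinarith
    have hσ0 : star x ⬝ᵥ σ *ᵥ x = 0 := by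
      apply Complex.ext <;> simp [hσzero, ← hσim]
    exact (hσ.dotProduct_mulVec_zero_iff x).mp hσ0
  have hherm : ∀ x y : n → ℂ, star x ⬝ᵥ (σ *ᵥ y) = star (σ *ᵥ x) ⬝ᵥ y := by
    intro x y
    rw [Matrix.star_mulVec, hσ.1, Matrix.dotProduct_mulVec]
  set cσ := star v ⬝ᵥ (σ *ᵥ v) with hcσ
  have hvu : star v ⬝ᵥ (σ *ᵥ v - cσ • v) = 0 := by
    rw [dotProduct_sub, dotProduct_smul, hv, smul_eq_mul, mul_one, ← hcσ, sub_self]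
  have hu0 : σ *ᵥ (σ *ᵥ v - cσ • v) = 0 := hker _ hvu
  have huu : star (σ *ᵥ v - cσ • v) ⬝ᵥ (σ *ᵥ v - cσ • v) = 0 := by
    rw [dotProduct_sub]
    have h1 : star (σ *ᵥ v - cσ • v) ⬝ᵥ (σ *ᵥ v) = 0 := by
      rw [hherm, hu0]
      simp
    have h2 : star (σ *ᵥ v - cσ • v) ⬝ᵥ v = 0 := by
      rw [← star_dotProduct_comm, hvu, star_zero]
    rw [h1, dotProduct_smul, h2]
    simp
  have hueq : σ *ᵥ v = cσ • v := by
    have h := dotProduct_star_self_eq_zero.mp huu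
    exact sub_eq_zero.mp h
  have hmv : ∀ y, σ *ᵥ y = ((star v ⬝ᵥ y) * cσ) • v := by
    intro y
    have hx : star v ⬝ᵥ (y - (star v ⬝ᵥ y) • v) = 0 := by
      rw [dotProduct_sub, dotProduct_smul, hv, smul_eq_mul, mul_one, sub_self]
    have h0 := hker _ hx
    have hdecomp : σ *ᵥ y = σ *ᵥ (y - (star v ⬝ᵥ y) • v) + (star v ⬝ᵥ y) • (σ *ᵥ v) := by
      rw [Matrix.mulVec_sub, Matrix.mulVec_smul]
      abel
    rw [hdecomp, h0, hueq, zero_add, smul_smul]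
  have hmat : σ = cσ • Matrix.of fun p q => v p * star (v q) := by
    ext p q
    have h := congrFun (hmv (Pi.single q 1)) p
    simp only [Matrix.mulVec_single_one, Matrix.col_apply, dotProduct_single, Pi.smul_apply, Pi.star_apply, smul_eq_mul, mul_one] at h
    simp only [Matrix.smul_apply, Matrix.of_apply, smul_eq_mul]
    rw [h]
    ring
  have htrace : (1 : ℂ) = cσ := by
    rw [← hσt, hmat, Matrix.trace_smul, outer_trace, hv, smul_eq_mul, mul_one]
  rw [hmat, ← htrace, one_smul]

set_option maxHeartbeats 1000000 in
lemma outer_extreme_rank {M N : ℕ} {v : Fin M × Fin N → ℂ} {a : Fin M → ℂ} {b : Fin N → ℂ}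
    (hva : ∀ p, v p = a p.1 * b p.2) (hv : star v ⬝ᵥ v = 1) :
    (Matrix.of fun p q => v p * star (v q)) ∈ Set.extremePoints ℝ (pptStates M N) ∧
    (Matrix.of fun p q => v p * star (v q)).rank = 1 := by
  have hvne : v ≠ 0 := by
    intro h
    rw [h] at hv
    simp at hv
  have hmem : (Matrix.of fun p q => v p * star (v q)) ∈ pptStates M N := by
    refine ⟨outer_psd v, ?_, by rw [outer_trace]; exact hv⟩
    have hpt : ptranspose (Matrix.of fun p q => v p * star (v q))
        = Matrix.of fun p q => (star (a p.1) * b p.2) * star (star (a q.1) * b q.2) := by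
      ext p q
      simp only [ptranspose, Matrix.of_apply, hva, star_mul', star_star]
      ring
    rw [hpt]
    exact outer_psd (fun p : Fin M × Fin N => star (a p.1) * b p.2)
  constructor
  · rw [mem_extremePoints]
    refine ⟨hmem, ?_⟩
    intro x1 hx1 x2 hx2 hseg
    obtain ⟨s, t, hs, ht, hst, heq⟩ := hseg
    refine ⟨pure_state_extreme_aux hv hx1.1 hx1.2.2 hx2.1 hs ht heq, ?_⟩
    refine pure_state_extreme_aux hv hx2.1 hx2.2.2 hx1.1 ht hs ?_
    rw [add_comm]
    exact heq
  · have hle : (Matrix.of fun p q => v p * star (v q)).rank ≤ 1 := by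
      have hsub : LinearMap.range (Matrix.of fun p q => v p * star (v q)).mulVecLin
          ≤ Submodule.span ℂ {v} := by
        rintro _ ⟨x, rfl⟩
        rw [Matrix.mulVecLin_apply, outer_mulVec]
        exact Submodule.smul_mem _ _ (Submodule.mem_span_singleton_self v)
      calc (Matrix.of fun p q => v p * star (v q)).rank
          ≤ Module.finrank ℂ (Submodule.span ℂ {v}) := Submodule.finrank_mono hsub
        _ = 1 := finrank_span_singleton hvne
    have hge : 1 ≤ (Matrix.of fun p q => v p * star (v q)).rank := by
      have hvmem : v ∈ LinearMap.range (Matrix.of fun p q => v p * star (v q)).mulVecLin := by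
        refine ⟨v, ?_⟩
        rw [Matrix.mulVecLin_apply, outer_mulVec, hv, one_smul]
      have hpos : 0 < Module.finrank ℂ
          (LinearMap.range (Matrix.of fun p q => v p * star (v q)).mulVecLin) := by
        rw [Module.finrank_pos_iff_exists_ne_zero]
        exact ⟨⟨v, hvmem⟩, by simpa [Submodule.mk_eq_zero] using hvne⟩
      exact hpos
    omega

/-- A pure PPT state is a product state; hence the rank-one extreme points of
the set of PPT states are exactly the pure product states. -/
theorem pure_ppt_is_product (M N : ℕ) (ψ : Fin M × Fin N → ℂ)
    (hunit : star ψ ⬝ᵥ ψ = 1)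
    (hppt : (ptranspose (Matrix.of fun p q => ψ p * star (ψ q))).PosSemidef) :
    (∃ (a : Fin M → ℂ) (b : Fin N → ℂ), ψ = fun p => a p.1 * b p.2) ∧
    ∀ ρ : Matrix (Fin M × Fin N) (Fin M × Fin N) ℂ,
      (ρ ∈ Set.extremePoints ℝ (pptStates M N) ∧ ρ.rank = 1) ↔
      ∃ (a : Fin M → ℂ) (b : Fin N → ℂ),
        (star (fun p : Fin M × Fin N => a p.1 * b p.2) ⬝ᵥ
          fun p : Fin M × Fin N => a p.1 * b p.2) = 1 ∧
        ρ = Matrix.of fun p q => (a p.1 * b p.2) * star (a q.1 * b q.2) := by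
  have hprod : ∀ (φ : Fin M × Fin N → ℂ), φ ≠ 0 →
      (ptranspose (Matrix.of fun p q => φ p * star (φ q))).PosSemidef →
      ∃ (a : Fin M → ℂ) (b : Fin N → ℂ), φ = fun p => a p.1 * b p.2 := by
    intro φ hne hp
    exact product_of_minors hne fun i k j l => minors_vanish hp i k j l
  have hψne : ψ ≠ 0 := by
    intro h
    rw [h] at hunit
    simp at hunit
  refine ⟨hprod ψ hψne hppt, ?_⟩
  intro ρ
  constructor
  · rintro ⟨hext, hrk⟩
    obtain ⟨hPSD, hPT, htr⟩ := hext.1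
    obtain ⟨φ, rfl⟩ := psd_rank_one_outer hPSD htr hrk
    have hφunit : star φ ⬝ᵥ φ = 1 := by rw [← outer_trace]; exact htr
    have hφne : φ ≠ 0 := by
      intro h
      rw [h] at hφunit
      simp at hφunit
    obtain ⟨a, b, hab⟩ := hprod φ hφne hPT
    have habp : ∀ p, φ p = a p.1 * b p.2 := fun p => congrFun hab p
    refine ⟨a, b, ?_, ?_⟩
    · rw [← hab]
      exact hφunit
    · ext p q
      simp [habp]
  · rintro ⟨a, b, hub, rfl⟩
    exact outer_extreme_rank (v := fun p : Fin M × Fin N => a p.1 * b p.2)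
      (a := a) (b := b) (fun p => rfl) hub
end
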